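/- For a positive definite real symmetric m×m matrix g, a real symmetric m×m matrix h, and complex α, β with Re(α) > (m+1)/2 − 1 and Re(β) > m, the function η*_m(g,h;α,β) := det(g)^{α+β−(m+1)/2} · ∫_{x∈V_m, x±h>0} e^{−tr(gx)} det(x+h)^{α−(m+1)/2} det(x−h)^{β−(m+1)/2} dx satisfies η*_m(g[a], h[ᵗa^{-1}]; α, β) = η*_m(g, h; α, β) for all a ∈ GL_m(ℝ). -/

import Mathlib

open Complex Real Matrix MeasureTheory

variable (m : ℕ)

/-- Build a symmetric matrix from its upper-triangular coordinates. -/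
def symOfCoords (f : {p : Fin m × Fin m // p.1 ≤ p.2} → ℝ) : Matrix (Fin m) (Fin m) ℝ :=
  fun i j => if h : i ≤ j then f ⟨(i, j), h⟩ else f ⟨(j, i), (not_le.mp h).le⟩

/-- The confluent hypergeometric function
`η*_m(g,h;α,β) = det(g)^{α+β−κ(m)} ∫_{x±h>0} e^{−tr(gx)} det(x+h)^{α−κ(m)} det(x−h)^{β−κ(m)} dx`,
the integral taken over the coordinates `x_{ij}`, `i ≤ j`, of real symmetric matrices `x`. -/
noncomputable def etaStar (g h : Matrix (Fin m) (Fin m) ℝ) (α β : ℂ) : ℂ :=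
  (g.det : ℂ) ^ (α + β - ((m : ℂ) + 1) / 2) *
    ∫ f : {p : Fin m × Fin m // p.1 ≤ p.2} → ℝ,
      Set.indicator {f | (symOfCoords m f + h).PosDef ∧ (symOfCoords m f - h).PosDef}
        (fun f => (Real.exp (-(g * symOfCoords m f).trace) : ℂ) *
          ((((symOfCoords m f + h).det : ℝ) : ℂ) ^ (α - ((m : ℂ) + 1) / 2)) *
          ((((symOfCoords m f - h).det : ℝ) : ℂ) ^ (β - ((m : ℂ) + 1) / 2))) f

abbrev Pairs (m : ℕ) := {p : Fin m × Fin m // p.1 ≤ p.2}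

section AuxLemmas

variable {m : ℕ}

@[to_additive]
theorem prod_fold {M : Type*} [CommMonoid M] (G : Fin m → Fin m → M) :
    ∏ k, ∏ l, G k l =
      ∏ q : Pairs m, (G q.1.1 q.1.2 * if q.1.1 = q.1.2 then 1 else G q.1.2 q.1.1) := by
  have h1 : ∏ k, ∏ l, G k l = ∏ p : Fin m × Fin m, G p.1 p.2 := by
    rw [Fintype.prod_prod_type]
  rw [h1]
  rw [← Finset.prod_filter_mul_prod_filter_not Finset.univ (fun p : Fin m × Fin m => p.1 ≤ p.2)]
  have h2 : ∏ p ∈ Finset.univ.filter (fun p : Fin m × Fin m => ¬ p.1 ≤ p.2), G p.1 p.2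
      = ∏ p ∈ Finset.univ.filter (fun p : Fin m × Fin m => p.1 < p.2), G p.2 p.1 := by
    refine Finset.prod_nbij' Prod.swap Prod.swap ?_ ?_ ?_ ?_ ?_ <;>
      simp +contextual [lt_iff_le_and_ne, Ne, eq_comm, not_le]
  have h3 : ∏ p ∈ Finset.univ.filter (fun p : Fin m × Fin m => p.1 < p.2), G p.2 p.1
      = ∏ p ∈ Finset.univ.filter (fun p : Fin m × Fin m => p.1 ≤ p.2),
          (if p.1 = p.2 then 1 else G p.2 p.1) := by
    rw [Finset.prod_filter, Finset.prod_filter]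
    refine Finset.prod_congr rfl fun p _ => ?_
    rcases lt_trichotomy p.1 p.2 with h | h | h
    · simp [h, le_of_lt h, ne_of_lt h]
    · simp [h, le_of_eq h]
    · simp [not_lt_of_gt h, not_le_of_gt h, (ne_of_gt h)]
  rw [h2, h3, ← Finset.prod_mul_distrib]
  rw [← Finset.prod_subtype (Finset.univ.filter (fun p : Fin m × Fin m => p.1 ≤ p.2))
    (fun p => by simp) (fun p : Fin m × Fin m => G p.1 p.2 * if p.1 = p.2 then 1 else G p.2 p.1)]

theorem symOfCoords_apply (f : Pairs m → ℝ) (q : Pairs m) :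
    symOfCoords m f q.1.1 q.1.2 = f q := by
  rcases q with ⟨⟨i, j⟩, h⟩; simp [symOfCoords, h]

theorem symOfCoords_isSymm (f : Pairs m → ℝ) : (symOfCoords m f).IsSymm := by
  ext i j
  simp only [transpose_apply, symOfCoords]
  rcases le_or_gt i j with h | h
  · rcases eq_or_lt_of_le h with rfl | h'
    · simp
    · rw [dif_neg (not_le_of_gt h'), dif_pos h]
  · rw [dif_pos (le_of_lt h), dif_neg (not_le_of_gt h)]

def coordsOf (X : Matrix (Fin m) (Fin m) ℝ) : Pairs m → ℝ := fun q => X q.1.1 q.1.2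

theorem symOfCoords_coordsOf {X : Matrix (Fin m) (Fin m) ℝ} (hX : X.IsSymm) :
    symOfCoords m (coordsOf X) = X := by
  ext i j
  simp only [symOfCoords, coordsOf]
  split
  · rfl
  · exact congrFun (congrFun hX j) i |>.symm |>.trans rfl

/-- matrix of the map `x ↦ c x cᵀ` in pair coordinates -/
def symA (c : Matrix (Fin m) (Fin m) ℝ) : Matrix (Pairs m) (Pairs m) ℝ :=
  Matrix.of fun p q =>
    c p.1.1 q.1.1 * c p.1.2 q.1.2 + if q.1.1 = q.1.2 then 0 else c p.1.1 q.1.2 * c p.1.2 q.1.1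

theorem symA_mulVec (c : Matrix (Fin m) (Fin m) ℝ) (f : Pairs m → ℝ) :
    symA c *ᵥ f = coordsOf (c * symOfCoords m f * cᵀ) := by
  funext p
  have : (c * symOfCoords m f * cᵀ) p.1.1 p.1.2
      = ∑ k, ∑ l, c p.1.1 k * symOfCoords m f k l * c p.1.2 l := by
    simp [Matrix.mul_apply, Finset.sum_mul, Finset.mul_sum]
    rw [Finset.sum_comm]
  rw [coordsOf, this, sum_fold (fun k l => c p.1.1 k * symOfCoords m f k l * c p.1.2 l)]
  simp only [mulVec, dotProduct]
  refine Finset.sum_congr rfl fun q _ => ?_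
  rcases q with ⟨⟨k, l⟩, hkl⟩
  simp only [symA, Matrix.of_apply]
  have hS1 : symOfCoords m f k l = f ⟨(k, l), hkl⟩ := by simp [symOfCoords, hkl]
  by_cases hkl' : k = l
  · subst hkl'
    simp [hS1]; ring
  · have : ¬ (l ≤ k) := fun hc => hkl' (le_antisymm hkl hc)
    have hS2 : symOfCoords m f l k = f ⟨(k, l), hkl⟩ := by simp [symOfCoords, this]
    simp [hS1, hS2, hkl']; ring

theorem isSymm_conj {X : Matrix (Fin m) (Fin m) ℝ} (hX : X.IsSymm)
    (c : Matrix (Fin m) (Fin m) ℝ) : (c * X * cᵀ).IsSymm := by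
  unfold Matrix.IsSymm
  rw [transpose_mul, transpose_mul, transpose_transpose, hX, Matrix.mul_assoc]

theorem symA_mul (b c : Matrix (Fin m) (Fin m) ℝ) : symA (b * c) = symA b * symA c := by
  have key : ∀ f, symA (b * c) *ᵥ f = (symA b * symA c) *ᵥ f := by
    intro f
    rw [← Matrix.mulVec_mulVec, symA_mulVec c f, symA_mulVec b,
      symOfCoords_coordsOf (isSymm_conj (symOfCoords_isSymm f) c), symA_mulVec]
    congr 1
    rw [transpose_mul]
    noncomm_ring
  ext p q
  have := congrFun (key (Pi.single q 1)) p
  simpa [Matrix.mulVec_single] using this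

theorem symA_one : symA (1 : Matrix (Fin m) (Fin m) ℝ) = 1 := by
  ext p q
  rcases p with ⟨⟨p1, p2⟩, hp⟩
  rcases q with ⟨⟨q1, q2⟩, hq⟩
  simp only [symA, Matrix.of_apply, Matrix.one_apply]
  by_cases h1 : q1 = q2
  · subst h1
    by_cases h2 : p1 = q1 <;> by_cases h3 : p2 = q1 <;>
      simp [h2, h3, Subtype.ext_iff, Prod.ext_iff]
  · rw [if_neg h1]
    have h45 : ¬(p1 = q2 ∧ p2 = q1) := by
      rintro ⟨h4, h5⟩
      exact h1 (le_antisymm hq (h4 ▸ h5 ▸ hp))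
    have hz : ((if p1 = q2 then (1:ℝ) else 0) * if p2 = q1 then (1:ℝ) else 0) = 0 := by
      by_cases h4 : p1 = q2
      · have h5 : p2 ≠ q1 := fun h5 => h45 ⟨h4, h5⟩
        simp [h5]
      · simp [h4]
    rw [hz, add_zero]
    by_cases h2 : p1 = q1 <;> by_cases h3 : p2 = q2 <;>
      simp [Matrix.one_apply, h2, h3, Subtype.ext_iff, Prod.ext_iff]

theorem symA_diagonal (t : Fin m → ℝ) :
    symA (Matrix.diagonal t) = Matrix.diagonal (fun q : Pairs m => t q.1.1 * t q.1.2) := by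
  ext p q
  rcases p with ⟨⟨p1, p2⟩, hp⟩
  rcases q with ⟨⟨q1, q2⟩, hq⟩
  simp only [symA, Matrix.of_apply, Matrix.diagonal_apply]
  by_cases hpq : (⟨(p1, p2), hp⟩ : Pairs m) = ⟨(q1, q2), hq⟩
  · obtain ⟨rfl, rfl⟩ : p1 = q1 ∧ p2 = q2 := by
      simpa [Subtype.ext_iff, Prod.ext_iff] using hpq
    rw [if_pos hpq]
    by_cases h : p1 = p2
    · simp [h]
    · simp [h, Matrix.diagonal_apply_ne _ h]
  · rw [if_neg hpq]
    have hne : ¬(p1 = q1 ∧ p2 = q2) := by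
      simpa [Subtype.ext_iff, Prod.ext_iff] using hpq
    have hz1 : ((if p1 = q1 then t p1 else 0) * if p2 = q2 then t p2 else 0) = 0 := by
      by_cases h2 : p1 = q1
      · have h3 : p2 ≠ q2 := fun h3 => hne ⟨h2, h3⟩
        simp [h3]
      · simp [h2]
    rw [hz1, zero_add]
    by_cases h1 : q1 = q2
    · rw [if_pos h1]
    · rw [if_neg h1]
      have h45 : ¬(p1 = q2 ∧ p2 = q1) := by
        rintro ⟨h4, h5⟩
        exact h1 (le_antisymm hq (h4 ▸ h5 ▸ hp))
      by_cases h4 : p1 = q2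
      · have h5 : p2 ≠ q1 := fun h5 => h45 ⟨h4, h5⟩
        simp [h5]
      · simp [h4]

theorem det_symA_diagonal_sq (t : Fin m → ℝ) :
    (symA (Matrix.diagonal t)).det ^ 2 = ((∏ i, t i) ^ (m + 1)) ^ 2 := by
  rw [symA_diagonal, Matrix.det_diagonal]
  have hA : ∏ k, ∏ l, (t k * t l) =
      ∏ q : Pairs m, ((t q.1.1 * t q.1.2) * if q.1.1 = q.1.2 then 1 else t q.1.2 * t q.1.1) :=
    prod_fold _
  have hAL : ∏ k, ∏ l, (t k * t l) = (∏ i, t i) ^ m * (∏ i, t i) ^ m := by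
    have : ∀ k, ∏ l, (t k * t l) = t k ^ m * ∏ i, t i := by
      intro k
      rw [Finset.prod_mul_distrib, Finset.prod_const]
      simp
    rw [Finset.prod_congr rfl fun k _ => this k, Finset.prod_mul_distrib, Finset.prod_pow,
      Finset.prod_const]
    simp
  have hD : ∏ k, ∏ l, (if k = l then t k * t l else 1) =
      ∏ q : Pairs m, ((if q.1.1 = q.1.2 then t q.1.1 * t q.1.2 else 1) *
        if q.1.1 = q.1.2 then 1 else (if q.1.2 = q.1.1 then t q.1.2 * t q.1.1 else 1)) :=
    prod_fold _
  have hDL : ∏ k, ∏ l, (if k = l then t k * t l else 1) = ∏ i, t i ^ 2 := by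
    refine Finset.prod_congr rfl fun k _ => ?_
    rw [Finset.prod_ite_eq]
    simp [sq]
  have hDR : (∏ q : Pairs m, ((if q.1.1 = q.1.2 then t q.1.1 * t q.1.2 else 1) *
        if q.1.1 = q.1.2 then 1 else (if q.1.2 = q.1.1 then t q.1.2 * t q.1.1 else 1)))
      = ∏ q : Pairs m, (if q.1.1 = q.1.2 then t q.1.1 * t q.1.2 else 1) := by
    refine Finset.prod_congr rfl fun q _ => ?_
    by_cases h : q.1.1 = q.1.2
    · simp [h]
    · simp [h, Ne.symm h]
  have key : (∏ q : Pairs m, t q.1.1 * t q.1.2) ^ 2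
      = ((∏ i, t i) ^ m * (∏ i, t i) ^ m) * ∏ i, t i ^ 2 := by
    rw [← hAL, hA, ← hDL, hD, hDR, sq, ← Finset.prod_mul_distrib, ← Finset.prod_mul_distrib]
    refine Finset.prod_congr rfl fun q _ => ?_
    by_cases h : q.1.1 = q.1.2
    · rw [if_pos h, if_pos h]; ring
    · rw [if_neg h, if_neg h]; ring
  rw [key, Finset.prod_pow]
  ring

section Transvection
variable {i j : Fin m} (hij : i ≠ j) (u : ℝ)

def icount (i : Fin m) (q : Pairs m) : ℕ :=
  (if q.1.1 = i then 1 else 0) + (if q.1.2 = i then 1 else 0)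

theorem transvection_entry (a b : Fin m) :
    Matrix.transvection i j u a b
      = (if a = b then (1:ℝ) else 0) + (if a = i ∧ b = j then u else 0) := by
  simp only [Matrix.transvection, Matrix.add_apply, Matrix.one_apply,
    Matrix.single, Matrix.of_apply]
  congr 1
  simp [and_comm, eq_comm]

include hij in
theorem transvection_fact {a b : Fin m}
    (h : Matrix.transvection i j u a b ≠ 0) : a = b ∨ (a = i ∧ b = j) := by
  by_contra hc
  push_neg at hc
  apply h
  rw [transvection_entry]
  have h2 : ¬(a = i ∧ b = j) := fun hx => hc.2 hx.1 hx.2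
  simp [hc.1, h2]

include hij in
theorem symA_transvection_eq_zero (p q : Pairs m) (hne : p ≠ q)
    (hle : icount i p ≤ icount i q) : symA (Matrix.transvection i j u) p q = 0 := by
  obtain ⟨⟨p1, p2⟩, hp⟩ := p
  obtain ⟨⟨q1, q2⟩, hq⟩ := q
  simp only [symA, Matrix.of_apply]
  have S1 : Matrix.transvection i j u p1 q1 * Matrix.transvection i j u p2 q2 = 0 := by
    by_contra hcon
    obtain ⟨h1, h2⟩ := mul_ne_zero_iff.mp hcon
    rcases transvection_fact hij u h1 with e1 | ⟨e1a, e1b⟩ <;>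
      rcases transvection_fact hij u h2 with e2 | ⟨e2a, e2b⟩
    · exact hne (Subtype.ext (Prod.ext e1 e2))
    · subst e1; subst e2a; subst e2b
      simp [icount, Ne.symm hij] at hle
    · subst e2; subst e1a; subst e1b
      simp [icount, Ne.symm hij] at hle
    · subst e1a; subst e1b; subst e2a; subst e2b
      simp [icount, Ne.symm hij] at hle
  rw [S1, zero_add]
  by_cases hq12 : q1 = q2
  · rw [if_pos hq12]
  rw [if_neg hq12]
  by_contra hcon
  obtain ⟨h1, h2⟩ := mul_ne_zero_iff.mp hcon
  rcases transvection_fact hij u h1 with e1 | ⟨e1a, e1b⟩ <;>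
    rcases transvection_fact hij u h2 with e2 | ⟨e2a, e2b⟩
  · exact hq12 (le_antisymm hq (e1 ▸ e2 ▸ hp))
  · subst e1; subst e2a; subst e2b
    simp [icount, Ne.symm hij] at hle
  · subst e2; subst e1a; subst e1b
    simp [icount, Ne.symm hij] at hle
  · subst e1a; subst e1b; subst e2a; subst e2b
    simp [icount, Ne.symm hij] at hle

include hij in
theorem symA_transvection_diag (p : Pairs m) :
    symA (Matrix.transvection i j u) p p = 1 := by
  obtain ⟨⟨p1, p2⟩, hp⟩ := p
  simp only [symA, Matrix.of_apply]
  have hTd : ∀ a : Fin m, Matrix.transvection i j u a a = 1 := by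
    intro a
    rw [transvection_entry]
    have : ¬(a = i ∧ a = j) := fun ⟨x, y⟩ => hij (x.symm.trans y)
    simp [this]
  rw [hTd, hTd, one_mul]
  by_cases h12 : p1 = p2
  · rw [if_pos h12, add_zero]
  rw [if_neg h12]
  have : Matrix.transvection i j u p1 p2 * Matrix.transvection i j u p2 p1 = 0 := by
    by_contra hcon
    obtain ⟨h1, h2⟩ := mul_ne_zero_iff.mp hcon
    rcases transvection_fact hij u h1 with e1 | ⟨e1a, e1b⟩ <;>
      rcases transvection_fact hij u h2 with e2 | ⟨e2a, e2b⟩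
    · exact h12 e1
    · exact h12 e1
    · exact h12 e2.symm
    · exact hij (e1a.symm.trans e2b)
  rw [this, add_zero]

include hij in
theorem det_symA_transvection : (symA (Matrix.transvection i j u)).det = 1 := by
  classical
  have hbt : (symA (Matrix.transvection i j u)).BlockTriangular
      (fun q : Pairs m => -(icount i q : ℤ)) := by
    intro p q hlt
    dsimp only at hlt
    have h1 : icount i p < icount i q := by omega
    exact symA_transvection_eq_zero hij u p q (fun he => by rw [he] at h1; omega) h1.le
  rw [hbt.det]
  refine Finset.prod_eq_one fun a _ => ?_
  have : (symA (Matrix.transvection i j u)).toSquareBlock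
      (fun q : Pairs m => -(icount i q : ℤ)) a = 1 := by
    ext ⟨p, hp⟩ ⟨q, hq⟩
    by_cases hpq : p = q
    · subst hpq
      simp [Matrix.toSquareBlock_def, Matrix.one_apply,
        symA_transvection_diag hij u p]
    · have hic : icount i p ≤ icount i q := by
        have : -(icount i p : ℤ) = -(icount i q : ℤ) := hp.trans hq.symm
        omega
      have hz := symA_transvection_eq_zero hij u p q hpq hic
      have hne : (⟨p, hp⟩ : {x // (fun q : Pairs m => -(icount i q : ℤ)) x = a})
          ≠ ⟨q, hq⟩ := fun hc => hpq (congrArg Subtype.val hc)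
      simp [Matrix.toSquareBlock_def, Matrix.one_apply, hz, hne]
  rw [this, Matrix.det_one]

end Transvection

theorem det_symA_list_prod (L : List (Matrix.TransvectionStruct (Fin m) ℝ)) :
    (symA (L.map Matrix.TransvectionStruct.toMatrix).prod).det = 1 := by
  induction L with
  | nil => simp [symA_one]
  | cons t L ih =>
    rw [List.map_cons, List.prod_cons, symA_mul, Matrix.det_mul, ih, mul_one]
    rcases t with ⟨ti, tj, htij, tc⟩
    exact det_symA_transvection htij tc

theorem abs_det_symA (c : Matrix (Fin m) (Fin m) ℝ) :
    |(symA c).det| = |c.det| ^ (m + 1) := by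
  obtain ⟨L, L', d, rfl⟩ := Matrix.Pivot.exists_list_transvec_mul_diagonal_mul_list_transvec c
  rw [symA_mul, symA_mul, Matrix.det_mul, Matrix.det_mul, det_symA_list_prod,
    det_symA_list_prod, one_mul, mul_one, Matrix.det_mul, Matrix.det_mul,
    Matrix.TransvectionStruct.det_toMatrix_prod, Matrix.TransvectionStruct.det_toMatrix_prod,
    one_mul, mul_one, Matrix.det_diagonal]
  have h2 := det_symA_diagonal_sq d
  rw [sq_eq_sq_iff_abs_eq_abs] at h2
  rw [h2, _root_.abs_pow]

open MeasureTheory in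
theorem integral_comp_symA (c : Matrix (Fin m) (Fin m) ℝ) (hc : IsUnit c.det)
    (φ : (Pairs m → ℝ) → ℂ) :
    ∫ f : Pairs m → ℝ, φ f = (|c.det| ^ (m + 1)) • ∫ f : Pairs m → ℝ, φ (symA c *ᵥ f) := by
  classical
  have hcdet : c.det ≠ 0 := hc.ne_zero
  have habs : |(symA c).det| = |c.det| ^ (m + 1) := abs_det_symA c
  have hdet : (symA c).det ≠ 0 := by
    intro h
    rw [h, abs_zero] at habs
    exact pow_ne_zero _ (abs_ne_zero.mpr hcdet) habs.symm
  have h1 : symA c⁻¹ * symA c = 1 := by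
    rw [← symA_mul, Matrix.nonsing_inv_mul c hc, symA_one]
  have h2 : symA c * symA c⁻¹ = 1 := by
    rw [← symA_mul, Matrix.mul_nonsing_inv c hc, symA_one]
  let e : (Pairs m → ℝ) ≃ₗ[ℝ] (Pairs m → ℝ) := Matrix.toLin'OfInv h1 h2
  let me : (Pairs m → ℝ) ≃ᵐ (Pairs m → ℝ) :=
    e.toContinuousLinearEquiv.toHomeomorph.toMeasurableEquiv
  have hcoe : (⇑me : (Pairs m → ℝ) → (Pairs m → ℝ)) = ⇑(Matrix.toLin' (symA c)) := rfl
  have hEq : ∫ f : Pairs m → ℝ, φ (symA c *ᵥ f)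
      = ∫ f : Pairs m → ℝ, φ (me f) := by
    refine integral_congr_ae (Filter.Eventually.of_forall fun f => ?_)
    rw [hcoe]
    rfl
  have hdet' : LinearMap.det (Matrix.toLin' (symA c)) ≠ 0 := by
    rw [LinearMap.det_toLin']; exact hdet
  have hmap : Measure.map (⇑me) (volume : Measure (Pairs m → ℝ))
      = ENNReal.ofReal |(LinearMap.det (Matrix.toLin' (symA c)))⁻¹| • volume := by
    rw [hcoe]
    exact Measure.map_linearMap_addHaar_eq_smul_addHaar volume hdet'
  have hInt : ∫ f : Pairs m → ℝ, φ (me f)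
      = |(LinearMap.det (Matrix.toLin' (symA c)))⁻¹| • ∫ f : Pairs m → ℝ, φ f := by
    rw [← MeasureTheory.integral_map_equiv me φ, hmap, integral_smul_measure,
      ENNReal.toReal_ofReal (abs_nonneg _)]
  rw [hEq, hInt, smul_smul, LinearMap.det_toLin', abs_inv, habs]
  rw [mul_inv_cancel₀ (pow_ne_zero _ (abs_ne_zero.mpr hcdet)), one_smul]

theorem posDef_conj {M B : Matrix (Fin m) (Fin m) ℝ} (hM : M.PosDef) (hB : IsUnit B.det) :
    (Bᵀ * M * B).PosDef := by
  refine posDef_iff_dotProduct_mulVec.mpr ⟨?_, ?_⟩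
  · have h1 : Mᵀ = M := by
      have := hM.1
      rwa [Matrix.IsHermitian, Matrix.conjTranspose_eq_transpose_of_trivial] at this
    rw [Matrix.IsHermitian, Matrix.conjTranspose_eq_transpose_of_trivial,
      Matrix.transpose_mul, Matrix.transpose_mul, Matrix.transpose_transpose, h1,
      Matrix.mul_assoc]
  · intro x hx
    have hBx : B *ᵥ x ≠ 0 := by
      intro hz
      have hinj : Function.Injective (B.mulVec) := Matrix.mulVec_injective_iff_isUnit.mpr
        ((Matrix.isUnit_iff_isUnit_det B).mpr hB)
      exact hx (hinj (by simpa using hz))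
    have := (posDef_iff_dotProduct_mulVec.mp hM).2 hBx
    have hcalc : dotProduct (star x) ((Bᵀ * M * B) *ᵥ x)
        = dotProduct (star (B *ᵥ x)) (M *ᵥ (B *ᵥ x)) := by
      simp only [star_trivial]
      rw [← Matrix.mulVec_mulVec, ← Matrix.mulVec_mulVec, Matrix.dotProduct_mulVec x Bᵀ,
        Matrix.vecMul_transpose]
    rw [hcalc]
    exact this

theorem posDef_conj_iff' {M : Matrix (Fin m) (Fin m) ℝ} {c : Matrix (Fin m) (Fin m) ℝ}
    (hc : IsUnit c.det) : (c * M * cᵀ).PosDef ↔ M.PosDef := by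
  have hct : IsUnit (cᵀ).det := by rwa [Matrix.det_transpose]
  constructor
  · intro hp
    have hcinv : IsUnit ((cᵀ)⁻¹).det := Matrix.isUnit_nonsing_inv_det cᵀ hct
    have := posDef_conj (M := c * M * cᵀ) (B := (cᵀ)⁻¹) hp hcinv
    have he : ((cᵀ)⁻¹)ᵀ * (c * M * cᵀ) * (cᵀ)⁻¹ = M := by
      rw [show ((cᵀ)⁻¹)ᵀ * (c * M * cᵀ) * (cᵀ)⁻¹
          = (((cᵀ)⁻¹)ᵀ * c) * M * (cᵀ * (cᵀ)⁻¹) by noncomm_ring]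
      rw [Matrix.mul_nonsing_inv _ hct, Matrix.mul_one, ← Matrix.transpose_nonsing_inv,
        Matrix.transpose_transpose, Matrix.nonsing_inv_mul _ hc, Matrix.one_mul]
    rwa [he] at this
  · intro hp
    have := posDef_conj (M := M) (B := cᵀ) hp hct
    rwa [Matrix.transpose_transpose] at this

end AuxLemmas

/-- `η*_m(g[a], h[ᵗa⁻¹]; α, β) = η*_m(g, h; α, β)` for all `a ∈ GL_m(ℝ)`,
when `Re α > (m+1)/2 − 1`, `Re β > m`, `g > 0` and `h` symmetric. -/
theorem etaStar_invariance (g h : Matrix (Fin m) (Fin m) ℝ) (hg : g.PosDef) (hh : h.IsSymm)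
    (α β : ℂ) (hα : ((m : ℝ) + 1) / 2 - 1 < α.re) (hβ : (m : ℝ) < β.re)
    (a : Matrix (Fin m) (Fin m) ℝ) (ha : IsUnit a.det) :
    etaStar m (aᵀ * g * a) (a⁻¹ * h * (aᵀ)⁻¹) α β = etaStar m g h α β := by
  classical
  have hadet : a.det ≠ 0 := ha.ne_zero
  set c : Matrix (Fin m) (Fin m) ℝ := a⁻¹ with hcdef
  have hc : IsUnit c.det := Matrix.isUnit_nonsing_inv_det a ha
  have hcd : c.det = (a.det)⁻¹ := by
    rw [hcdef, Matrix.det_nonsing_inv, Ring.inverse_eq_inv']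
  have hct : cᵀ = (aᵀ)⁻¹ := Matrix.transpose_nonsing_inv a
  unfold etaStar
  set κ : ℂ := ((m : ℂ) + 1) / 2 with hκ
  set sa : ℝ := (a.det) ^ 2 with hsa
  have hsa_pos : 0 < sa := by positivity
  set t : ℝ := (c.det) ^ 2 with ht
  have ht_inv : t = sa⁻¹ := by rw [ht, hsa, hcd, inv_pow]
  set h' : Matrix (Fin m) (Fin m) ℝ := a⁻¹ * h * (aᵀ)⁻¹ with hh'def
  set g' : Matrix (Fin m) (Fin m) ℝ := aᵀ * g * a with hg'def
  set S : Set (Pairs m → ℝ) :=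
    {f | (symOfCoords m f + h).PosDef ∧ (symOfCoords m f - h).PosDef} with hS
  set Φ : (Pairs m → ℝ) → ℂ := fun f =>
    (Real.exp (-(g * symOfCoords m f).trace) : ℂ) *
      ((((symOfCoords m f + h).det : ℝ) : ℂ) ^ (α - κ)) *
      ((((symOfCoords m f - h).det : ℝ) : ℂ) ^ (β - κ)) with hΦ
  set S' : Set (Pairs m → ℝ) :=
    {f | (symOfCoords m f + h').PosDef ∧ (symOfCoords m f - h').PosDef} with hS'
  set Φ' : (Pairs m → ℝ) → ℂ := fun f =>
    (Real.exp (-(g' * symOfCoords m f).trace) : ℂ) *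
      ((((symOfCoords m f + h').det : ℝ) : ℂ) ^ (α - κ)) *
      ((((symOfCoords m f - h').det : ℝ) : ℂ) ^ (β - κ)) with hΦ'
  have hh'c : h' = c * h * cᵀ := by rw [hh'def, hct, hcdef]
  -- pointwise identity
  set K1 : ℂ := ((t : ℝ) : ℂ) ^ (α - κ) * ((t : ℝ) : ℂ) ^ (β - κ) with hK1
  have hpoint : ∀ f : Pairs m → ℝ,
      Set.indicator S' Φ' (symA c *ᵥ f) = K1 * Set.indicator S Φ f := by
    intro f
    have hX : symOfCoords m (symA c *ᵥ f) = c * symOfCoords m f * cᵀ := by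
      rw [symA_mulVec, symOfCoords_coordsOf (isSymm_conj (symOfCoords_isSymm f) c)]
    have hplus : symOfCoords m (symA c *ᵥ f) + h' = c * (symOfCoords m f + h) * cᵀ := by
      rw [hX, hh'c]; noncomm_ring
    have hminus : symOfCoords m (symA c *ᵥ f) - h' = c * (symOfCoords m f - h) * cᵀ := by
      rw [hX, hh'c]; noncomm_ring
    have hmem : (symA c *ᵥ f) ∈ S' ↔ f ∈ S := by
      rw [hS', hS, Set.mem_setOf_eq, Set.mem_setOf_eq, hplus, hminus,
        posDef_conj_iff' hc, posDef_conj_iff' hc]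
    by_cases hf : f ∈ S
    · rw [Set.indicator_of_mem (hmem.mpr hf) Φ', Set.indicator_of_mem hf Φ]
      obtain ⟨hP1, hP2⟩ := hf
      -- trace identity
      have hac : a * c = 1 := Matrix.mul_nonsing_inv a ha
      have htr : (g' * symOfCoords m (symA c *ᵥ f)).trace = (g * symOfCoords m f).trace := by
        rw [hX, hg'def]
        rw [show aᵀ * g * a * (c * symOfCoords m f * cᵀ)
            = aᵀ * ((g * (a * c)) * symOfCoords m f * cᵀ) by noncomm_ring, hac, Matrix.mul_one]
        rw [Matrix.trace_mul_comm]
        rw [show g * symOfCoords m f * cᵀ * aᵀ = g * symOfCoords m f * (cᵀ * aᵀ) by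
          noncomm_ring]
        rw [← Matrix.transpose_mul, hac, Matrix.transpose_one, Matrix.mul_one]
      -- determinant identities
      have hdetp : ((symOfCoords m (symA c *ᵥ f) + h').det : ℝ)
          = t * (symOfCoords m f + h).det := by
        rw [hplus, Matrix.det_mul, Matrix.det_mul, Matrix.det_transpose, ht]; ring
      have hdetm : ((symOfCoords m (symA c *ᵥ f) - h').det : ℝ)
          = t * (symOfCoords m f - h).det := by
        rw [hminus, Matrix.det_mul, Matrix.det_mul, Matrix.det_transpose, ht]; ring
      have ht0 : (0:ℝ) ≤ t := sq_nonneg _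
      have hcp1 : ((((symOfCoords m (symA c *ᵥ f) + h').det : ℝ)) : ℂ) ^ (α - κ)
          = ((t : ℝ) : ℂ) ^ (α - κ) * (((symOfCoords m f + h).det : ℝ) : ℂ) ^ (α - κ) := by
        rw [hdetp, Complex.ofReal_mul]
        exact Complex.mul_cpow_ofReal_nonneg ht0 hP1.det_pos.le _
      have hcp2 : ((((symOfCoords m (symA c *ᵥ f) - h').det : ℝ)) : ℂ) ^ (β - κ)
          = ((t : ℝ) : ℂ) ^ (β - κ) * (((symOfCoords m f - h).det : ℝ) : ℂ) ^ (β - κ) := by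
        rw [hdetm, Complex.ofReal_mul]
        exact Complex.mul_cpow_ofReal_nonneg ht0 hP2.det_pos.le _
      rw [hΦ', hΦ, hK1]
      simp only
      rw [htr, hcp1, hcp2]
      ring
    · rw [Set.indicator_of_notMem (fun hx => hf (hmem.mp hx)) Φ',
        Set.indicator_of_notMem hf Φ, mul_zero]
  -- the constant identity
  have hdetg' : (g'.det : ℝ) = sa * g.det := by
    rw [hg'def, Matrix.det_mul, Matrix.det_mul, Matrix.det_transpose, hsa]; ring
  have hsane : (sa : ℂ) ≠ 0 := by
    simpa using ne_of_gt hsa_pos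
  have hconst : ((g'.det : ℝ) : ℂ) ^ (α + β - κ) * ((|c.det| ^ (m + 1) : ℝ) : ℂ) * K1
      = ((g.det : ℝ) : ℂ) ^ (α + β - κ) := by
    rw [hdetg', Complex.ofReal_mul,
      Complex.mul_cpow_ofReal_nonneg hsa_pos.le hg.det_pos.le]
    have hK1' : K1 = (((sa : ℝ) : ℂ) ^ (α - κ))⁻¹ * (((sa : ℝ) : ℂ) ^ (β - κ))⁻¹ := by
      rw [hK1, ht_inv, Complex.ofReal_inv, Complex.inv_cpow _ _ (by
        rw [Complex.arg_ofReal_of_nonneg hsa_pos.le]; exact Real.pi_ne_zero.symm),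
        Complex.inv_cpow _ _ (by
        rw [Complex.arg_ofReal_of_nonneg hsa_pos.le]; exact Real.pi_ne_zero.symm)]
    rw [hK1']
    have hcombine : ((sa : ℝ) : ℂ) ^ (α + β - κ) * (((sa : ℝ) : ℂ) ^ (α - κ))⁻¹
        * (((sa : ℝ) : ℂ) ^ (β - κ))⁻¹ = ((sa : ℝ) : ℂ) ^ κ := by
      have hne1 : ((sa : ℝ) : ℂ) ^ (α - κ) ≠ 0 := fun hz =>
        hsane ((Complex.cpow_eq_zero_iff _ _).mp hz).1
      have hne2 : ((sa : ℝ) : ℂ) ^ (β - κ) ≠ 0 := fun hz =>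
        hsane ((Complex.cpow_eq_zero_iff _ _).mp hz).1
      rw [show α + β - κ = (α - κ) + ((β - κ) + κ) by ring, Complex.cpow_add _ _ hsane,
        Complex.cpow_add _ _ hsane]
      field_simp
    have hfinal : ((sa : ℝ) : ℂ) ^ κ * ((|c.det| ^ (m + 1) : ℝ) : ℂ) = 1 := by
      have habs : sa = |a.det| ^ 2 := by rw [hsa, _root_.sq_abs]
      have hκr : κ = ((((m : ℝ) + 1) / 2 : ℝ) : ℂ) := by rw [hκ]; push_cast; ring
      have hpowr : (sa : ℝ) ^ (((m : ℝ) + 1) / 2) = |a.det| ^ (m + 1) := by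
        rw [habs, ← Real.rpow_natCast |a.det| 2, ← Real.rpow_mul (abs_nonneg _)]
        rw [show ((2 : ℕ) : ℝ) * (((m : ℝ) + 1) / 2) = (m : ℝ) + 1 by ring]
        rw [show ((m : ℝ) + 1) = (((m + 1 : ℕ) : ℝ)) by push_cast; ring,
          Real.rpow_natCast]
      have hcabs : |c.det| = |a.det|⁻¹ := by rw [hcd, abs_inv]
      rw [hκr, ← Complex.ofReal_cpow hsa_pos.le, hpowr, hcabs, ← Complex.ofReal_mul]
      rw [← mul_pow, mul_inv_cancel₀ (abs_ne_zero.mpr hadet), one_pow, Complex.ofReal_one]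
    calc ((sa : ℝ) : ℂ) ^ (α + β - κ) * ((g.det : ℝ) : ℂ) ^ (α + β - κ)
          * ((|c.det| ^ (m + 1) : ℝ) : ℂ)
          * ((((sa : ℝ) : ℂ) ^ (α - κ))⁻¹ * (((sa : ℝ) : ℂ) ^ (β - κ))⁻¹)
        = (((sa : ℝ) : ℂ) ^ (α + β - κ) * (((sa : ℝ) : ℂ) ^ (α - κ))⁻¹
            * (((sa : ℝ) : ℂ) ^ (β - κ))⁻¹) * ((|c.det| ^ (m + 1) : ℝ) : ℂ)
            * ((g.det : ℝ) : ℂ) ^ (α + β - κ) := by ring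
      _ = ((g.det : ℝ) : ℂ) ^ (α + β - κ) := by rw [hcombine, hfinal, one_mul]
  -- assemble
  rw [integral_comp_symA c hc (Set.indicator S' Φ')]
  have hcongr : ∫ f : Pairs m → ℝ, Set.indicator S' Φ' (symA c *ᵥ f)
      = K1 * ∫ f : Pairs m → ℝ, Set.indicator S Φ f := by
    rw [← MeasureTheory.integral_const_mul]
    exact integral_congr_ae (Filter.Eventually.of_forall fun f => hpoint f)
  rw [hcongr, Complex.real_smul]
  calc ((g'.det : ℝ) : ℂ) ^ (α + β - κ) * ((((|c.det| ^ (m + 1) : ℝ)) : ℂ)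
        * (K1 * ∫ f : Pairs m → ℝ, Set.indicator S Φ f))
      = (((g'.det : ℝ) : ℂ) ^ (α + β - κ) * ((|c.det| ^ (m + 1) : ℝ) : ℂ) * K1)
        * ∫ f : Pairs m → ℝ, Set.indicator S Φ f := by ring
    _ = ((g.det : ℝ) : ℂ) ^ (α + β - κ) * ∫ f : Pairs m → ℝ, Set.indicator S Φ f := by
        rw [hconst]
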